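/- Let K be a bounded, C_0, characteristic kernel on ℝ^d, f an entropy function such that 1 is the unique minimizer of f, ν ∈ M_+(ℝ^d), and λ > 0. For μ ∈ M(ℝ^d), let σ̂_μ ∈ M_+(ℝ^d) denote the unique minimizer defining D^λ_{f,ν}(μ). Then the map μ ↦ μ − σ̂_μ is (1/λ·λ =) nonexpansive in the MMD metric in the following sense (expressing that the gradient of D^λ_{f,ν} is (1/λ)-Lipschitz): for all μ, ρ ∈ M(ℝ^d), d_K(μ − σ̂_μ, ρ − σ̂_ρ) ≤ d_K(μ, ρ). -/

import Mathlib

open MeasureTheory ENNReal Filter Topology Set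
open scoped ZeroAtInfty RealInnerProductSpace BoundedContinuousFunction

noncomputable section

/-- Euclidean space `ℝ^d`. -/
abbrev Rd (d : ℕ) : Type := EuclideanSpace ℝ (Fin d)

/-- An entropy function: a proper, convex, lower semicontinuous `f : ℝ → [0,∞]`
with `f x = ∞` for `x < 0` and `f 1 = 0` (properness is automatic from `f 1 = 0`). -/
structure IsEntropy (f : ℝ → ℝ≥0∞) : Prop where
  convex : ∀ x y a b : ℝ, 0 ≤ a → 0 ≤ b → a + b = 1 →
    f (a * x + b * y) ≤ ENNReal.ofReal a * f x + ENNReal.ofReal b * f y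
  lsc : LowerSemicontinuous f
  top_of_neg : ∀ x : ℝ, x < 0 → f x = ⊤
  one_eq_zero : f 1 = 0

/-- `1` is the unique minimizer of the entropy function `f`, i.e. `f t > 0` for `t ≠ 1`. -/
def UniqueMinOne (f : ℝ → ℝ≥0∞) : Prop := ∀ t : ℝ, t ≠ 1 → 0 < f t

/-- The recession constant `f'_∞ = lim_{t → ∞} f t / t` (the limit exists for convex `f`,
so it coincides with the `limsup`). -/
noncomputable def recession (f : ℝ → ℝ≥0∞) : ℝ≥0∞ :=
  Filter.limsup (fun t : ℝ => f t / ENNReal.ofReal t) Filter.atTop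

/-- The `f`-divergence of finite nonnegative measures:
`D_f(μ|ν) = ∫ f(dμ/dν) dν + f'_∞ · μˢ(ℝ^d)` where `μ = (dμ/dν) ν + μˢ`
is the Lebesgue decomposition of `μ` w.r.t. `ν` (convention `0 ⬝ ∞ = 0`). -/
noncomputable def fDiv {d : ℕ} (f : ℝ → ℝ≥0∞) (μ ν : Measure (Rd d)) : ℝ≥0∞ :=
  ∫⁻ x, f ((μ.rnDeriv ν x).toReal) ∂ν + recession f * μ.singularPart ν Set.univ

/-- A kernel on `ℝ^d`: symmetric, positive definite, bounded, and with
`K x · ∈ C₀(ℝ^d)` for every `x`. -/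
structure IsKernel {d : ℕ} (K : Rd d → Rd d → ℝ) : Prop where
  symm : ∀ x y, K x y = K y x
  posdef : ∀ (n : ℕ) (x : Fin n → Rd d) (a : Fin n → ℝ),
    0 ≤ ∑ i, ∑ j, a i * a j * K (x i) (x j)
  bounded : ∃ C : ℝ, ∀ x, K x x ≤ C
  cont : ∀ x, Continuous (K x)
  zero_at_infty : ∀ x, Tendsto (K x) (Filter.cocompact (Rd d)) (𝓝 0)

/-- Integral of a function against a finite signed measure, via the Jordan decomposition. -/
noncomputable def sIntegral {d : ℕ} (α : SignedMeasure (Rd d)) (g : Rd d → ℝ) : ℝ :=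
  ∫ x, g x ∂α.toJordanDecomposition.posPart - ∫ x, g x ∂α.toJordanDecomposition.negPart

/-- Squared MMD of two finite signed measures: `∬ K(x,y) d(α−β)(x) d(α−β)(y)`. -/
noncomputable def mmdSq {d : ℕ} (K : Rd d → Rd d → ℝ) (α β : SignedMeasure (Rd d)) : ℝ :=
  sIntegral (α - β) (fun x => sIntegral (α - β) (fun y => K x y))

/-- The maximum mean discrepancy `d_K` of two finite signed measures. -/
noncomputable def mmd {d : ℕ} (K : Rd d → Rd d → ℝ) (α β : SignedMeasure (Rd d)) : ℝ :=
  Real.sqrt (mmdSq K α β)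

/-- A kernel is characteristic if `d_K(α,β) = 0` implies `α = β` for finite signed
measures `α, β`. -/
def Characteristic {d : ℕ} (K : Rd d → Rd d → ℝ) : Prop :=
  ∀ α β : SignedMeasure (Rd d), mmd K α β = 0 → α = β

/-- The MMD-regularized `f`-divergence `D^λ_{f,ν}(μ)` of a finite signed measure `μ`:
`inf_{σ ∈ M₊} D_f(σ|ν) + (1/(2λ)) d_K(μ,σ)²`. -/
noncomputable def regFDiv {d : ℕ} (K : Rd d → Rd d → ℝ) (f : ℝ → ℝ≥0∞)
    (ν : Measure (Rd d)) (lam : ℝ) (μ : SignedMeasure (Rd d)) : ℝ≥0∞ :=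
  ⨅ σ : {σ : Measure (Rd d) // IsFiniteMeasure σ},
    fDiv f σ.1 ν +
      ENNReal.ofReal (mmdSq K μ (@Measure.toSignedMeasure _ _ σ.1 σ.2) / (2 * lam))

-- ============ Auxiliary infrastructure ============

section Aux

variable {d : ℕ}

/-- Integrability of a bounded measurable function w.r.t. a finite measure. -/
lemma integrable_bdd (π : Measure (Rd d)) [IsFiniteMeasure π] {g : Rd d → ℝ}
    (hg : Measurable g) {C : ℝ} (hb : ∀ x, |g x| ≤ C) : Integrable g π :=
  ⟨hg.aestronglyMeasurable,
    HasFiniteIntegral.of_bounded (C := C) (ae_of_all _ (fun x => by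
      rw [Real.norm_eq_abs]; exact hb x))⟩

/-- From equality of differences of signed measures, equality of sums of measures. -/
lemma measure_pair_eq {p q r s : Measure (Rd d)} [IsFiniteMeasure p] [IsFiniteMeasure q]
    [IsFiniteMeasure r] [IsFiniteMeasure s]
    (h : p.toSignedMeasure - q.toSignedMeasure = r.toSignedMeasure - s.toSignedMeasure) :
    p + s = r + q := by
  ext A hA
  have h2 : (p.toSignedMeasure - q.toSignedMeasure) A
      = (r.toSignedMeasure - s.toSignedMeasure) A := by rw [h]
  rw [VectorMeasure.sub_apply, VectorMeasure.sub_apply,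
    Measure.toSignedMeasure_apply_measurable hA, Measure.toSignedMeasure_apply_measurable hA,
    Measure.toSignedMeasure_apply_measurable hA, Measure.toSignedMeasure_apply_measurable hA]
    at h2
  rw [Measure.add_apply, Measure.add_apply]
  have hp := measure_ne_top p A
  have hq := measure_ne_top q A
  have hr := measure_ne_top r A
  have hs := measure_ne_top s A
  rw [← ENNReal.toReal_eq_toReal_iff' (by finiteness) (by finiteness),
    ENNReal.toReal_add hp hs, ENNReal.toReal_add hr hq]
  simp only [measureReal_def] at h2
  linarith

/-- Jordan representation of a signed measure. -/
lemma jordan_rep (α : SignedMeasure (Rd d)) :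
    α = α.toJordanDecomposition.posPart.toSignedMeasure
      - α.toJordanDecomposition.negPart.toSignedMeasure := by
  conv_lhs => rw [← α.toSignedMeasure_toJordanDecomposition]
  rfl

/-- `sIntegral` computed from any representation as a difference of finite measures. -/
lemma sIntegral_rep {α : SignedMeasure (Rd d)} {p q : Measure (Rd d)}
    [IsFiniteMeasure p] [IsFiniteMeasure q]
    (h : α = p.toSignedMeasure - q.toSignedMeasure)
    {g : Rd d → ℝ} (hg : Measurable g) {C : ℝ} (hb : ∀ x, |g x| ≤ C) :
    sIntegral α g = ∫ x, g x ∂p - ∫ x, g x ∂q := by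
  have hj := jordan_rep α
  have hkey : α.toJordanDecomposition.posPart + q = p + α.toJordanDecomposition.negPart :=
    measure_pair_eq (by rw [← hj, ← h])
  have h1 := integral_add_measure (μ := α.toJordanDecomposition.posPart) (ν := q)
    (integrable_bdd _ hg hb) (integrable_bdd _ hg hb) (f := g)
  have h2 := integral_add_measure (μ := p) (ν := α.toJordanDecomposition.negPart)
    (integrable_bdd _ hg hb) (integrable_bdd _ hg hb) (f := g)
  rw [← hkey] at h2
  rw [h1] at h2
  unfold sIntegral
  linarith

end Aux
section Kernel

open scoped NNReal

variable {d : ℕ}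

/-- The double integral of the kernel against two (nonnegative) measures. -/
noncomputable def II (K : Rd d → Rd d → ℝ) (p q : Measure (Rd d)) : ℝ :=
  ∫ x, (∫ y, K x y ∂q) ∂p

/-- The energy bilinear form on signed measures. -/
noncomputable def Bf (K : Rd d → Rd d → ℝ) (α β : SignedMeasure (Rd d)) : ℝ :=
  sIntegral α (fun x => sIntegral β (fun y => K x y))

lemma mmdSq_eq_Bf (K : Rd d → Rd d → ℝ) (α β : SignedMeasure (Rd d)) :
    mmdSq K α β = Bf K (α - β) (α - β) := rfl

/-- A bounded symmetric positive semidefinite kernel is uniformly bounded. -/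
lemma kernel_bound {K : Rd d → Rd d → ℝ} (hK : IsKernel K) :
    ∃ C : ℝ, 0 ≤ C ∧ ∀ x y, |K x y| ≤ C := by
  obtain ⟨C, hC⟩ := hK.bounded
  have hdiag : ∀ x, 0 ≤ K x x := by
    intro x
    have := hK.posdef 1 (fun _ => x) (fun _ => 1)
    simpa using this
  have hC0 : 0 ≤ C := le_trans (hdiag 0) (hC 0)
  refine ⟨C, hC0, fun x y => ?_⟩
  have h1 := hK.posdef 2 ![x, y] ![1, 1]
  have h2 := hK.posdef 2 ![x, y] ![1, -1]
  simp [Fin.sum_univ_two] at h1 h2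
  have hsym := hK.symm x y
  have hxx := hC x
  have hyy := hC y
  rw [abs_le]
  constructor <;> nlinarith [hdiag x, hdiag y]

lemma cont_K2 {K : Rd d → Rd d → ℝ} (hK : IsKernel K) (y : Rd d) :
    Continuous (fun x => K x y) := by
  have : (fun x => K x y) = fun x => K y x := funext fun x => hK.symm x y
  rw [this]
  exact hK.cont y

lemma contInner {K : Rd d → Rd d → ℝ} (hK : IsKernel K) {C : ℝ} (hC : ∀ x y, |K x y| ≤ C)
    (q : Measure (Rd d)) [IsFiniteMeasure q] :
    Continuous (fun x => ∫ y, K x y ∂q) := by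
  apply continuous_of_dominated (bound := fun _ => C)
  · exact fun x => (hK.cont x).aestronglyMeasurable
  · exact fun x => ae_of_all _ fun y => by rw [Real.norm_eq_abs]; exact hC x y
  · exact integrable_const C
  · exact ae_of_all _ fun y => cont_K2 hK y

lemma boundInner {K : Rd d → Rd d → ℝ} {C : ℝ} (hC : ∀ x y, |K x y| ≤ C)
    (q : Measure (Rd d)) [IsFiniteMeasure q] :
    ∀ x, |∫ y, K x y ∂q| ≤ C * (q Set.univ).toReal := by
  intro x
  rw [← Real.norm_eq_abs]
  exact norm_integral_le_of_norm_le_const (ae_of_all _ fun y => by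
    rw [Real.norm_eq_abs]; exact hC x y)

lemma intK {K : Rd d → Rd d → ℝ} (hK : IsKernel K) {C : ℝ} (hC : ∀ x y, |K x y| ≤ C)
    (x : Rd d) (q : Measure (Rd d)) [IsFiniteMeasure q] :
    Integrable (fun y => K x y) q :=
  integrable_bdd q (hK.cont x).measurable (hC x)

lemma intInner {K : Rd d → Rd d → ℝ} (hK : IsKernel K) {C : ℝ} (hC : ∀ x y, |K x y| ≤ C)
    (p q : Measure (Rd d)) [IsFiniteMeasure p] [IsFiniteMeasure q] :
    Integrable (fun x => ∫ y, K x y ∂q) p :=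
  integrable_bdd p (contInner hK hC q).measurable (boundInner hC q)

variable {K : Rd d → Rd d → ℝ} (hK : IsKernel K) {C : ℝ} (hC : ∀ x y, |K x y| ≤ C)

include hK hC

lemma II_add_left (p1 p2 q : Measure (Rd d)) [IsFiniteMeasure p1] [IsFiniteMeasure p2]
    [IsFiniteMeasure q] : II K (p1 + p2) q = II K p1 q + II K p2 q :=
  integral_add_measure (intInner hK hC p1 q) (intInner hK hC p2 q)

lemma II_add_right (p q1 q2 : Measure (Rd d)) [IsFiniteMeasure p] [IsFiniteMeasure q1]
    [IsFiniteMeasure q2] : II K p (q1 + q2) = II K p q1 + II K p q2 := by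
  unfold II
  rw [integral_congr_ae (ae_of_all _ fun x =>
    integral_add_measure (intK hK hC x q1) (intK hK hC x q2))]
  exact integral_add (intInner hK hC p q1) (intInner hK hC p q2)

lemma II_smul_left (c : ℝ≥0) (p q : Measure (Rd d)) [IsFiniteMeasure p] [IsFiniteMeasure q] :
    II K (c • p) q = (c : ℝ) * II K p q := by
  unfold II
  rw [integral_smul_nnreal_measure]
  simp [NNReal.smul_def, smul_eq_mul]

lemma II_smul_right (c : ℝ≥0) (p q : Measure (Rd d)) [IsFiniteMeasure p] [IsFiniteMeasure q] :
    II K p (c • q) = (c : ℝ) * II K p q := by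
  unfold II
  rw [integral_congr_ae (ae_of_all _ fun x => by
    rw [integral_smul_nnreal_measure (fun y => K x y) c]
    simp [NNReal.smul_def, smul_eq_mul] : ∀ᵐ x ∂p, (∫ y, K x y ∂(c • q)) = (c:ℝ) * ∫ y, K x y ∂q)]
  rw [integral_const_mul]

/-- `Bf` in terms of representations by differences of finite measures. -/
lemma B_rep {α β : SignedMeasure (Rd d)} {p q r s : Measure (Rd d)}
    [IsFiniteMeasure p] [IsFiniteMeasure q] [IsFiniteMeasure r] [IsFiniteMeasure s]
    (h1 : α = p.toSignedMeasure - q.toSignedMeasure)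
    (h2 : β = r.toSignedMeasure - s.toSignedMeasure) :
    Bf K α β = II K p r - II K p s - (II K q r - II K q s) := by
  have hg : (fun x => sIntegral β (fun y => K x y))
      = fun x => (∫ y, K x y ∂r) - ∫ y, K x y ∂s := by
    funext x
    exact sIntegral_rep h2 (hK.cont x).measurable (hC x)
  unfold Bf
  rw [hg]
  have hmeas : Measurable fun x => (∫ y, K x y ∂r) - ∫ y, K x y ∂s :=
    ((contInner hK hC r).sub (contInner hK hC s)).measurable
  have hbd : ∀ x, |(∫ y, K x y ∂r) - ∫ y, K x y ∂s|
      ≤ C * (r Set.univ).toReal + C * (s Set.univ).toReal := fun x =>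
    (abs_sub _ _).trans (add_le_add (boundInner hC r x) (boundInner hC s x))
  rw [sIntegral_rep h1 hmeas hbd,
    integral_sub (intInner hK hC p r) (intInner hK hC p s),
    integral_sub (intInner hK hC q r) (intInner hK hC q s)]
  rfl

end Kernel
section Bilin

open scoped NNReal

variable {d : ℕ}

lemma rep_sub {α β : SignedMeasure (Rd d)} {p q r s : Measure (Rd d)}
    [IsFiniteMeasure p] [IsFiniteMeasure q] [IsFiniteMeasure r] [IsFiniteMeasure s]
    (h1 : α = p.toSignedMeasure - q.toSignedMeasure)
    (h2 : β = r.toSignedMeasure - s.toSignedMeasure) :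
    α - β = (p + s).toSignedMeasure - (q + r).toSignedMeasure := by
  rw [Measure.toSignedMeasure_add, Measure.toSignedMeasure_add, h1, h2]; abel

lemma rep_add {α β : SignedMeasure (Rd d)} {p q r s : Measure (Rd d)}
    [IsFiniteMeasure p] [IsFiniteMeasure q] [IsFiniteMeasure r] [IsFiniteMeasure s]
    (h1 : α = p.toSignedMeasure - q.toSignedMeasure)
    (h2 : β = r.toSignedMeasure - s.toSignedMeasure) :
    α + β = (p + r).toSignedMeasure - (q + s).toSignedMeasure := by
  rw [Measure.toSignedMeasure_add, Measure.toSignedMeasure_add, h1, h2]; abel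

lemma rep_smul {α : SignedMeasure (Rd d)} {p q : Measure (Rd d)}
    [IsFiniteMeasure p] [IsFiniteMeasure q] {t : ℝ} (ht : 0 ≤ t)
    (h : α = p.toSignedMeasure - q.toSignedMeasure) :
    t • α = (t.toNNReal • p).toSignedMeasure - (t.toNNReal • q).toSignedMeasure := by
  rw [Measure.toSignedMeasure_smul, Measure.toSignedMeasure_smul, h, smul_sub,
    NNReal.smul_def, NNReal.smul_def, Real.coe_toNNReal t ht]

variable {K : Rd d → Rd d → ℝ} (hK : IsKernel K) {C : ℝ} (hC : ∀ x y, |K x y| ≤ C)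

include hK hC

/-- Expansion of the quadratic form along `γ - t • δ`, `t ≥ 0`. -/
lemma B_expand_sub (γ δ : SignedMeasure (Rd d)) {t : ℝ} (ht : 0 ≤ t) :
    Bf K (γ - t • δ) (γ - t • δ)
      = Bf K γ γ - t * (Bf K γ δ + Bf K δ γ) + t^2 * Bf K δ δ := by
  set g1 := γ.toJordanDecomposition.posPart
  set g2 := γ.toJordanDecomposition.negPart
  set d1 := δ.toJordanDecomposition.posPart
  set d2 := δ.toJordanDecomposition.negPart
  have hγ := jordan_rep γ
  have hδ := jordan_rep δ
  have h1 : γ - t • δ = (g1 + t.toNNReal • d2).toSignedMeasure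
      - (g2 + t.toNNReal • d1).toSignedMeasure := rep_sub hγ (rep_smul ht hδ)
  rw [B_rep hK hC h1 h1, B_rep hK hC hγ hγ, B_rep hK hC hγ hδ, B_rep hK hC hδ hγ,
    B_rep hK hC hδ hδ]
  simp only [II_add_left hK hC, II_add_right hK hC, II_smul_left hK hC, II_smul_right hK hC,
    Real.coe_toNNReal t ht]
  ring

/-- Expansion of the quadratic form along `γ + t • δ`, `t ≥ 0`. -/
lemma B_expand_add (γ δ : SignedMeasure (Rd d)) {t : ℝ} (ht : 0 ≤ t) :
    Bf K (γ + t • δ) (γ + t • δ)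
      = Bf K γ γ + t * (Bf K γ δ + Bf K δ γ) + t^2 * Bf K δ δ := by
  set g1 := γ.toJordanDecomposition.posPart
  set g2 := γ.toJordanDecomposition.negPart
  set d1 := δ.toJordanDecomposition.posPart
  set d2 := δ.toJordanDecomposition.negPart
  have hγ := jordan_rep γ
  have hδ := jordan_rep δ
  have h1 : γ + t • δ = (g1 + t.toNNReal • d1).toSignedMeasure
      - (g2 + t.toNNReal • d2).toSignedMeasure := rep_add hγ (rep_smul ht hδ)
  rw [B_rep hK hC h1 h1, B_rep hK hC hγ hγ, B_rep hK hC hγ hδ, B_rep hK hC hδ hγ,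
    B_rep hK hC hδ hδ]
  simp only [II_add_left hK hC, II_add_right hK hC, II_smul_left hK hC, II_smul_right hK hC,
    Real.coe_toNNReal t ht]
  ring

/-- Additivity of `Bf` in the first argument (in subtraction form). -/
lemma B_sub_left (α β γ : SignedMeasure (Rd d)) :
    Bf K (α - β) γ = Bf K α γ - Bf K β γ := by
  have hα := jordan_rep α
  have hβ := jordan_rep β
  have hγ := jordan_rep γ
  rw [B_rep hK hC (rep_sub hα hβ) hγ, B_rep hK hC hα hγ, B_rep hK hC hβ hγ]
  simp only [II_add_left hK hC]
  ring

lemma B_sub_right (α β γ : SignedMeasure (Rd d)) :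
    Bf K γ (α - β) = Bf K γ α - Bf K γ β := by
  have hα := jordan_rep α
  have hβ := jordan_rep β
  have hγ := jordan_rep γ
  rw [B_rep hK hC hγ (rep_sub hα hβ), B_rep hK hC hγ hα, B_rep hK hC hγ hβ]
  simp only [II_add_right hK hC]
  ring

omit hK hC

include hK hC in
/-- Positive semidefiniteness of the energy, via the characteristic property. -/
lemma B_nonneg (hchar : Characteristic K) (γ : SignedMeasure (Rd d)) : 0 ≤ Bf K γ γ := by
  by_contra hneg
  push_neg at hneg
  have hmmd : mmdSq K γ 0 = Bf K γ γ := by rw [mmdSq_eq_Bf, sub_zero]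
  have h0 : mmd K γ 0 = 0 := by
    unfold mmd
    rw [hmmd]
    exact Real.sqrt_eq_zero_of_nonpos hneg.le
  have hγ0 : γ = 0 := hchar γ 0 h0
  rw [hγ0] at hneg
  have : Bf K (0 : SignedMeasure (Rd d)) 0 = 0 := by
    have h00 : (0 : SignedMeasure (Rd d))
        = (0 : Measure (Rd d)).toSignedMeasure - (0 : Measure (Rd d)).toSignedMeasure := by
      simp
    rw [B_rep hK hC h00 h00]
    ring
  linarith


end Bilin
section CS

variable {d : ℕ} {K : Rd d → Rd d → ℝ} (hK : IsKernel K) {C : ℝ} (hC : ∀ x y, |K x y| ≤ C)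

include hK hC in
/-- Cauchy–Schwarz for the (not necessarily symmetric) energy form. -/
lemma cross_le_sqrt (hchar : Characteristic K) (γ δ : SignedMeasure (Rd d)) :
    Bf K γ δ + Bf K δ γ ≤ 2 * Real.sqrt (Bf K γ γ) * Real.sqrt (Bf K δ δ) := by
  have hA0 : 0 ≤ Bf K γ γ := B_nonneg hK hC hchar γ
  have hC0 : 0 ≤ Bf K δ δ := B_nonneg hK hC hchar δ
  have hquad : ∀ x : ℝ, 0 ≤ Bf K δ δ * (x * x) + (Bf K γ δ + Bf K δ γ) * x + Bf K γ γ := by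
    intro x
    rcases le_or_gt 0 x with hx | hx
    · have h := B_nonneg hK hC hchar (γ + x • δ)
      rw [B_expand_add hK hC γ δ hx] at h
      nlinarith
    · have hx' : 0 ≤ -x := by linarith
      have h := B_nonneg hK hC hchar (γ - (-x) • δ)
      rw [B_expand_sub hK hC γ δ hx'] at h
      nlinarith
  have hdisc := discrim_le_zero hquad
  rw [discrim] at hdisc
  have hcr2 : (Bf K γ δ + Bf K δ γ) ^ 2 ≤ 4 * Bf K γ γ * Bf K δ δ := by nlinarith
  have h1 : Bf K γ δ + Bf K δ γ ≤ Real.sqrt ((Bf K γ δ + Bf K δ γ) ^ 2) := by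
    rw [Real.sqrt_sq_eq_abs]; exact le_abs_self _
  have h2 : Real.sqrt ((Bf K γ δ + Bf K δ γ) ^ 2) ≤ Real.sqrt (4 * Bf K γ γ * Bf K δ δ) :=
    Real.sqrt_le_sqrt hcr2
  have h3 : Real.sqrt (4 * Bf K γ γ * Bf K δ δ)
      = 2 * Real.sqrt (Bf K γ γ) * Real.sqrt (Bf K δ δ) := by
    rw [show 4 * Bf K γ γ * Bf K δ δ = (2:ℝ)^2 * (Bf K γ γ * Bf K δ δ) by ring,
      Real.sqrt_mul (by positivity), Real.sqrt_sq (by norm_num), Real.sqrt_mul hA0]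
    ring
  linarith

end CS
section FDiv

open scoped NNReal

variable {d : ℕ}

lemma fDiv_self (f : ℝ → ℝ≥0∞) (hf : IsEntropy f) (ν : Measure (Rd d)) [IsFiniteMeasure ν] :
    fDiv f ν ν = 0 := by
  unfold fDiv
  rw [Measure.singularPart_self, Measure.coe_zero, Pi.zero_apply, mul_zero, add_zero]
  have h : ∀ᵐ x ∂ν, f ((ν.rnDeriv ν x).toReal) = 0 := by
    filter_upwards [Measure.rnDeriv_self ν] with x hx
    rw [hx]
    simpa using hf.one_eq_zero
  rw [lintegral_congr_ae h, lintegral_zero]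

lemma fDiv_convex (f : ℝ → ℝ≥0∞) (hf : IsEntropy f) (ν : Measure (Rd d)) [IsFiniteMeasure ν]
    (σ1 σ2 : Measure (Rd d)) [IsFiniteMeasure σ1] [IsFiniteMeasure σ2]
    {t : ℝ} (ht0 : 0 ≤ t) (ht1 : t ≤ 1) :
    fDiv f ((1-t).toNNReal • σ1 + t.toNNReal • σ2) ν
      ≤ ENNReal.ofReal (1-t) * fDiv f σ1 ν + ENNReal.ofReal t * fDiv f σ2 ν := by
  have hs0 : (0:ℝ) ≤ 1 - t := by linarith
  set a : ℝ≥0 := (1-t).toNNReal with ha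
  set b : ℝ≥0 := t.toNNReal with hb
  haveI : σ1.HaveLebesgueDecomposition ν := Measure.haveLebesgueDecomposition_of_sigmaFinite _ _
  haveI : σ2.HaveLebesgueDecomposition ν := Measure.haveLebesgueDecomposition_of_sigmaFinite _ _
  haveI : (a • σ1).HaveLebesgueDecomposition ν := Measure.haveLebesgueDecomposition_of_sigmaFinite _ _
  haveI : (b • σ2).HaveLebesgueDecomposition ν := Measure.haveLebesgueDecomposition_of_sigmaFinite _ _
  have hfm : Measurable f := hf.lsc.measurable
  have hae : ∀ᵐ x ∂ν, f (((a • σ1 + b • σ2).rnDeriv ν x).toReal)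
      ≤ ENNReal.ofReal (1-t) * f ((σ1.rnDeriv ν x).toReal)
        + ENNReal.ofReal t * f ((σ2.rnDeriv ν x).toReal) := by
    filter_upwards [Measure.rnDeriv_add (a • σ1) (b • σ2) ν,
      Measure.rnDeriv_smul_left σ1 ν a, Measure.rnDeriv_smul_left σ2 ν b,
      Measure.rnDeriv_lt_top σ1 ν, Measure.rnDeriv_lt_top σ2 ν] with x h1 h2 h3 h4 h5
    have hx : ((a • σ1 + b • σ2).rnDeriv ν x).toReal
        = (1-t) * (σ1.rnDeriv ν x).toReal + t * (σ2.rnDeriv ν x).toReal := by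
      rw [h1, Pi.add_apply, h2, h3, Pi.smul_apply, Pi.smul_apply,
        ENNReal.toReal_add (by
          simp only [ENNReal.smul_def, smul_eq_mul]
          exact ENNReal.mul_ne_top ENNReal.coe_ne_top h4.ne) (by
          simp only [ENNReal.smul_def, smul_eq_mul]
          exact ENNReal.mul_ne_top ENNReal.coe_ne_top h5.ne),
        ENNReal.toReal_smul, ENNReal.toReal_smul, NNReal.smul_def, NNReal.smul_def,
        smul_eq_mul, smul_eq_mul, ha, hb, Real.coe_toNNReal _ hs0, Real.coe_toNNReal _ ht0]
    rw [hx]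
    exact hf.convex _ _ (1-t) t hs0 ht0 (by ring)
  have hm1 : Measurable fun x => f ((σ1.rnDeriv ν x).toReal) :=
    hfm.comp (σ1.measurable_rnDeriv ν).ennreal_toReal
  have hm2 : Measurable fun x => f ((σ2.rnDeriv ν x).toReal) :=
    hfm.comp (σ2.measurable_rnDeriv ν).ennreal_toReal
  have hlint : ∫⁻ x, f (((a • σ1 + b • σ2).rnDeriv ν x).toReal) ∂ν
      ≤ ENNReal.ofReal (1-t) * ∫⁻ x, f ((σ1.rnDeriv ν x).toReal) ∂ν
        + ENNReal.ofReal t * ∫⁻ x, f ((σ2.rnDeriv ν x).toReal) ∂ν := by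
    calc ∫⁻ x, f (((a • σ1 + b • σ2).rnDeriv ν x).toReal) ∂ν
        ≤ ∫⁻ x, (ENNReal.ofReal (1-t) * f ((σ1.rnDeriv ν x).toReal)
            + ENNReal.ofReal t * f ((σ2.rnDeriv ν x).toReal)) ∂ν := lintegral_mono_ae hae
      _ = _ := by
          rw [lintegral_add_left (hm1.const_mul _),
            lintegral_const_mul _ hm1, lintegral_const_mul _ hm2]
  have hsing : (a • σ1 + b • σ2).singularPart ν Set.univ
      = ENNReal.ofReal (1-t) * σ1.singularPart ν Set.univ
        + ENNReal.ofReal t * σ2.singularPart ν Set.univ := by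
    rw [Measure.singularPart_add, Measure.singularPart_smul, Measure.singularPart_smul,
      Measure.add_apply, Measure.smul_apply, Measure.smul_apply]
    simp only [ENNReal.smul_def, smul_eq_mul]
    congr 1
  unfold fDiv
  calc ∫⁻ x, f (((a • σ1 + b • σ2).rnDeriv ν x).toReal) ∂ν
        + recession f * (a • σ1 + b • σ2).singularPart ν Set.univ
      ≤ (ENNReal.ofReal (1-t) * ∫⁻ x, f ((σ1.rnDeriv ν x).toReal) ∂ν
          + ENNReal.ofReal t * ∫⁻ x, f ((σ2.rnDeriv ν x).toReal) ∂ν)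
        + recession f * (ENNReal.ofReal (1-t) * σ1.singularPart ν Set.univ
          + ENNReal.ofReal t * σ2.singularPart ν Set.univ) := by
        exact add_le_add hlint (by rw [hsing])
    _ = _ := by ring

end FDiv
section Key

open scoped NNReal

variable {d : ℕ}

lemma regFDiv_le (K : Rd d → Rd d → ℝ) (f : ℝ → ℝ≥0∞) (ν : Measure (Rd d)) (lam : ℝ)
    (μ : SignedMeasure (Rd d)) (σ : Measure (Rd d)) [IsFiniteMeasure σ] :
    regFDiv K f ν lam μ
      ≤ fDiv f σ ν + ENNReal.ofReal (mmdSq K μ σ.toSignedMeasure / (2 * lam)) :=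
  iInf_le _ (⟨σ, inferInstance⟩ : {σ : Measure (Rd d) // IsFiniteMeasure σ})

lemma sub_convex_comb (μ : SignedMeasure (Rd d)) (σ1 σ2 : Measure (Rd d))
    [IsFiniteMeasure σ1] [IsFiniteMeasure σ2] {t : ℝ} (ht0 : 0 ≤ t) (ht1 : t ≤ 1) :
    μ - ((1-t).toNNReal • σ1 + t.toNNReal • σ2).toSignedMeasure
      = (μ - σ1.toSignedMeasure) - t • (σ2.toSignedMeasure - σ1.toSignedMeasure) := by
  rw [Measure.toSignedMeasure_add, Measure.toSignedMeasure_smul, Measure.toSignedMeasure_smul,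
    NNReal.smul_def, NNReal.smul_def, Real.coe_toNNReal _ (by linarith : (0:ℝ) ≤ 1 - t),
    Real.coe_toNNReal _ ht0, smul_sub, sub_smul (R := ℝ) (M := SignedMeasure (Rd d)), one_smul]
  abel

lemma key_ineq {K : Rd d → Rd d → ℝ} (hK : IsKernel K) {C : ℝ}
    (hC : ∀ x y, |K x y| ≤ C) (hchar : Characteristic K)
    (f : ℝ → ℝ≥0∞) (hf : IsEntropy f)
    (ν : Measure (Rd d)) [IsFiniteMeasure ν] {lam : ℝ} (hlam : 0 < lam)
    (μ : SignedMeasure (Rd d)) (σ1 σ2 : Measure (Rd d)) [IsFiniteMeasure σ1] [IsFiniteMeasure σ2]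
    (h2top : fDiv f σ2 ν ≠ ⊤)
    (hopt : fDiv f σ1 ν + ENNReal.ofReal (mmdSq K μ σ1.toSignedMeasure / (2 * lam))
      = regFDiv K f ν lam μ) :
    (fDiv f σ1 ν).toReal - (fDiv f σ2 ν).toReal
      ≤ -(Bf K (μ - σ1.toSignedMeasure) (σ2.toSignedMeasure - σ1.toSignedMeasure)
          + Bf K (σ2.toSignedMeasure - σ1.toSignedMeasure) (μ - σ1.toSignedMeasure))
        / (2*lam) := by
  have h2l : (0:ℝ) < 2 * lam := by linarith
  have hregne : regFDiv K f ν lam μ ≠ ⊤ := by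
    have h := regFDiv_le K f ν lam μ ν
    rw [fDiv_self f hf ν, zero_add] at h
    exact (h.trans_lt ENNReal.ofReal_lt_top).ne
  have h1top : fDiv f σ1 ν ≠ ⊤ :=
    ne_top_of_le_ne_top hregne (hopt ▸ le_self_add)
  -- abbreviations (as plain terms)
  have hQ0eq : mmdSq K μ σ1.toSignedMeasure
      = Bf K (μ - σ1.toSignedMeasure) (μ - σ1.toSignedMeasure) := mmdSq_eq_Bf K μ _
  have hBuu : 0 ≤ Bf K (μ - σ1.toSignedMeasure) (μ - σ1.toSignedMeasure) :=
    B_nonneg hK hC hchar _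
  have hBee : 0 ≤ Bf K (σ2.toSignedMeasure - σ1.toSignedMeasure)
      (σ2.toSignedMeasure - σ1.toSignedMeasure) := B_nonneg hK hC hchar _
  -- the one-parameter family inequality
  have step : ∀ t : ℝ, 0 < t → t ≤ 1 →
      (fDiv f σ1 ν).toReal - (fDiv f σ2 ν).toReal
        ≤ (-(Bf K (μ - σ1.toSignedMeasure) (σ2.toSignedMeasure - σ1.toSignedMeasure)
            + Bf K (σ2.toSignedMeasure - σ1.toSignedMeasure) (μ - σ1.toSignedMeasure))
           + t * Bf K (σ2.toSignedMeasure - σ1.toSignedMeasure)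
              (σ2.toSignedMeasure - σ1.toSignedMeasure)) / (2*lam) := by
    intro t ht0 ht1
    have hs0 : (0:ℝ) ≤ 1 - t := by linarith
    have hQteq : mmdSq K μ ((1-t).toNNReal • σ1 + t.toNNReal • σ2).toSignedMeasure
        = Bf K (μ - σ1.toSignedMeasure) (μ - σ1.toSignedMeasure)
          - t * (Bf K (μ - σ1.toSignedMeasure) (σ2.toSignedMeasure - σ1.toSignedMeasure)
            + Bf K (σ2.toSignedMeasure - σ1.toSignedMeasure) (μ - σ1.toSignedMeasure))
          + t^2 * Bf K (σ2.toSignedMeasure - σ1.toSignedMeasure)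
            (σ2.toSignedMeasure - σ1.toSignedMeasure) := by
      rw [mmdSq_eq_Bf, sub_convex_comb μ σ1 σ2 ht0.le ht1,
        B_expand_sub hK hC _ _ ht0.le]
    have hQtnn : 0 ≤ Bf K (μ - σ1.toSignedMeasure) (μ - σ1.toSignedMeasure)
          - t * (Bf K (μ - σ1.toSignedMeasure) (σ2.toSignedMeasure - σ1.toSignedMeasure)
            + Bf K (σ2.toSignedMeasure - σ1.toSignedMeasure) (μ - σ1.toSignedMeasure))
          + t^2 * Bf K (σ2.toSignedMeasure - σ1.toSignedMeasure)
            (σ2.toSignedMeasure - σ1.toSignedMeasure) := by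
      rw [← B_expand_sub hK hC _ _ ht0.le]
      exact B_nonneg hK hC hchar _
    have hEnn : fDiv f σ1 ν + ENNReal.ofReal
          (Bf K (μ - σ1.toSignedMeasure) (μ - σ1.toSignedMeasure) / (2*lam))
        ≤ (ENNReal.ofReal (1-t) * fDiv f σ1 ν + ENNReal.ofReal t * fDiv f σ2 ν)
          + ENNReal.ofReal ((Bf K (μ - σ1.toSignedMeasure) (μ - σ1.toSignedMeasure)
            - t * (Bf K (μ - σ1.toSignedMeasure) (σ2.toSignedMeasure - σ1.toSignedMeasure)
              + Bf K (σ2.toSignedMeasure - σ1.toSignedMeasure) (μ - σ1.toSignedMeasure))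
            + t^2 * Bf K (σ2.toSignedMeasure - σ1.toSignedMeasure)
              (σ2.toSignedMeasure - σ1.toSignedMeasure)) / (2*lam)) := by
      have h0 := hopt
      rw [hQ0eq] at h0
      calc fDiv f σ1 ν + ENNReal.ofReal
            (Bf K (μ - σ1.toSignedMeasure) (μ - σ1.toSignedMeasure) / (2*lam))
          = regFDiv K f ν lam μ := h0
        _ ≤ fDiv f ((1-t).toNNReal • σ1 + t.toNNReal • σ2) ν + ENNReal.ofReal
              (mmdSq K μ ((1-t).toNNReal • σ1 + t.toNNReal • σ2).toSignedMeasure / (2*lam)) :=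
            regFDiv_le K f ν lam μ _
        _ ≤ _ := by
            rw [hQteq]
            exact add_le_add_left (fDiv_convex f hf ν σ1 σ2 ht0.le ht1) _
    have hRHSne : (ENNReal.ofReal (1-t) * fDiv f σ1 ν + ENNReal.ofReal t * fDiv f σ2 ν)
          + ENNReal.ofReal ((Bf K (μ - σ1.toSignedMeasure) (μ - σ1.toSignedMeasure)
            - t * (Bf K (μ - σ1.toSignedMeasure) (σ2.toSignedMeasure - σ1.toSignedMeasure)
              + Bf K (σ2.toSignedMeasure - σ1.toSignedMeasure) (μ - σ1.toSignedMeasure))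
            + t^2 * Bf K (σ2.toSignedMeasure - σ1.toSignedMeasure)
              (σ2.toSignedMeasure - σ1.toSignedMeasure)) / (2*lam)) ≠ ⊤ := by
      apply ENNReal.add_ne_top.mpr
      constructor
      · exact ENNReal.add_ne_top.mpr ⟨ENNReal.mul_ne_top ENNReal.ofReal_ne_top h1top,
          ENNReal.mul_ne_top ENNReal.ofReal_ne_top h2top⟩
      · exact ENNReal.ofReal_ne_top
    have hLHSne : fDiv f σ1 ν + ENNReal.ofReal
        (Bf K (μ - σ1.toSignedMeasure) (μ - σ1.toSignedMeasure) / (2*lam)) ≠ ⊤ :=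
      ENNReal.add_ne_top.mpr ⟨h1top, ENNReal.ofReal_ne_top⟩
    have hR := (ENNReal.toReal_le_toReal hLHSne hRHSne).mpr hEnn
    rw [ENNReal.toReal_add h1top ENNReal.ofReal_ne_top,
      ENNReal.toReal_add (ENNReal.add_ne_top.mpr ⟨ENNReal.mul_ne_top ENNReal.ofReal_ne_top h1top,
        ENNReal.mul_ne_top ENNReal.ofReal_ne_top h2top⟩) ENNReal.ofReal_ne_top,
      ENNReal.toReal_add (ENNReal.mul_ne_top ENNReal.ofReal_ne_top h1top)
        (ENNReal.mul_ne_top ENNReal.ofReal_ne_top h2top),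
      ENNReal.toReal_mul, ENNReal.toReal_mul,
      ENNReal.toReal_ofReal (div_nonneg hBuu h2l.le),
      ENNReal.toReal_ofReal (div_nonneg hQtnn h2l.le),
      ENNReal.toReal_ofReal hs0, ENNReal.toReal_ofReal ht0.le] at hR
    -- now a real inequality; clear the convex combination
    have hdiff : (Bf K (μ - σ1.toSignedMeasure) (μ - σ1.toSignedMeasure)
            - t * (Bf K (μ - σ1.toSignedMeasure) (σ2.toSignedMeasure - σ1.toSignedMeasure)
              + Bf K (σ2.toSignedMeasure - σ1.toSignedMeasure) (μ - σ1.toSignedMeasure))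
            + t^2 * Bf K (σ2.toSignedMeasure - σ1.toSignedMeasure)
              (σ2.toSignedMeasure - σ1.toSignedMeasure)) / (2*lam)
          - Bf K (μ - σ1.toSignedMeasure) (μ - σ1.toSignedMeasure) / (2*lam)
        = t * ((-(Bf K (μ - σ1.toSignedMeasure) (σ2.toSignedMeasure - σ1.toSignedMeasure)
            + Bf K (σ2.toSignedMeasure - σ1.toSignedMeasure) (μ - σ1.toSignedMeasure))
           + t * Bf K (σ2.toSignedMeasure - σ1.toSignedMeasure)
              (σ2.toSignedMeasure - σ1.toSignedMeasure)) / (2*lam)) := by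
      field_simp
      ring
    have hsub : t * ((fDiv f σ1 ν).toReal - (fDiv f σ2 ν).toReal)
        = t * (fDiv f σ1 ν).toReal - t * (fDiv f σ2 ν).toReal := by ring
    have hR' : t * ((fDiv f σ1 ν).toReal - (fDiv f σ2 ν).toReal)
        ≤ t * ((-(Bf K (μ - σ1.toSignedMeasure) (σ2.toSignedMeasure - σ1.toSignedMeasure)
            + Bf K (σ2.toSignedMeasure - σ1.toSignedMeasure) (μ - σ1.toSignedMeasure))
           + t * Bf K (σ2.toSignedMeasure - σ1.toSignedMeasure)
              (σ2.toSignedMeasure - σ1.toSignedMeasure)) / (2*lam)) := by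
      nlinarith [hR, hdiff, hsub]
    exact le_of_mul_le_mul_left (by linarith [hR']) ht0
  -- ε-argument: pass to the limit t → 0⁺
  have hnegdiv : -(Bf K (μ - σ1.toSignedMeasure) (σ2.toSignedMeasure - σ1.toSignedMeasure)
      + Bf K (σ2.toSignedMeasure - σ1.toSignedMeasure) (μ - σ1.toSignedMeasure)) / (2*lam)
      = -((Bf K (μ - σ1.toSignedMeasure) (σ2.toSignedMeasure - σ1.toSignedMeasure)
      + Bf K (σ2.toSignedMeasure - σ1.toSignedMeasure) (μ - σ1.toSignedMeasure)) / (2*lam)) := by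
    ring
  by_contra hcon
  push_neg at hcon
  set ε := (fDiv f σ1 ν).toReal - (fDiv f σ2 ν).toReal
    + (Bf K (μ - σ1.toSignedMeasure) (σ2.toSignedMeasure - σ1.toSignedMeasure)
      + Bf K (σ2.toSignedMeasure - σ1.toSignedMeasure) (μ - σ1.toSignedMeasure)) / (2*lam)
    with hε
  have hεpos : 0 < ε := by
    rw [hε]
    linarith [hcon, hnegdiv]
  have htpos : 0 < min 1 (ε * lam / (Bf K (σ2.toSignedMeasure - σ1.toSignedMeasure)
      (σ2.toSignedMeasure - σ1.toSignedMeasure) + 1)) :=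
    lt_min one_pos (by positivity)
  have hstep := step _ htpos (min_le_left _ _)
  have htle := min_le_right 1 (ε * lam / (Bf K (σ2.toSignedMeasure - σ1.toSignedMeasure)
      (σ2.toSignedMeasure - σ1.toSignedMeasure) + 1))
  have h1 : min 1 (ε * lam / (Bf K (σ2.toSignedMeasure - σ1.toSignedMeasure)
        (σ2.toSignedMeasure - σ1.toSignedMeasure) + 1))
        * Bf K (σ2.toSignedMeasure - σ1.toSignedMeasure)
          (σ2.toSignedMeasure - σ1.toSignedMeasure)
      ≤ ε * lam := by
    calc min 1 (ε * lam / (Bf K (σ2.toSignedMeasure - σ1.toSignedMeasure)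
          (σ2.toSignedMeasure - σ1.toSignedMeasure) + 1))
          * Bf K (σ2.toSignedMeasure - σ1.toSignedMeasure)
            (σ2.toSignedMeasure - σ1.toSignedMeasure)
        ≤ (ε * lam / (Bf K (σ2.toSignedMeasure - σ1.toSignedMeasure)
            (σ2.toSignedMeasure - σ1.toSignedMeasure) + 1))
          * Bf K (σ2.toSignedMeasure - σ1.toSignedMeasure)
            (σ2.toSignedMeasure - σ1.toSignedMeasure) :=
          mul_le_mul_of_nonneg_right htle hBee
      _ ≤ ε * lam := by
          rw [div_mul_eq_mul_div, div_le_iff₀ (by positivity)]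
          nlinarith [hεpos, hlam, hBee]
  have hfinal : (fDiv f σ1 ν).toReal - (fDiv f σ2 ν).toReal
      ≤ -(Bf K (μ - σ1.toSignedMeasure) (σ2.toSignedMeasure - σ1.toSignedMeasure)
          + Bf K (σ2.toSignedMeasure - σ1.toSignedMeasure) (μ - σ1.toSignedMeasure)) / (2*lam)
        + ε / 2 := by
    calc (fDiv f σ1 ν).toReal - (fDiv f σ2 ν).toReal
        ≤ (-(Bf K (μ - σ1.toSignedMeasure) (σ2.toSignedMeasure - σ1.toSignedMeasure)
            + Bf K (σ2.toSignedMeasure - σ1.toSignedMeasure) (μ - σ1.toSignedMeasure))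
           + min 1 (ε * lam / (Bf K (σ2.toSignedMeasure - σ1.toSignedMeasure)
              (σ2.toSignedMeasure - σ1.toSignedMeasure) + 1))
             * Bf K (σ2.toSignedMeasure - σ1.toSignedMeasure)
               (σ2.toSignedMeasure - σ1.toSignedMeasure)) / (2*lam) := hstep
      _ ≤ (-(Bf K (μ - σ1.toSignedMeasure) (σ2.toSignedMeasure - σ1.toSignedMeasure)
            + Bf K (σ2.toSignedMeasure - σ1.toSignedMeasure) (μ - σ1.toSignedMeasure))
           + ε * lam) / (2*lam) := by
          exact (div_le_div_iff_of_pos_right h2l).mpr (by linarith [h1])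
      _ = -(Bf K (μ - σ1.toSignedMeasure) (σ2.toSignedMeasure - σ1.toSignedMeasure)
            + Bf K (σ2.toSignedMeasure - σ1.toSignedMeasure) (μ - σ1.toSignedMeasure)) / (2*lam)
          + ε / 2 := by
          field_simp
  linarith [hfinal, hεpos, hnegdiv, hcon]

end Key

/-- Nonexpansiveness in MMD of `μ ↦ μ − σ̂_μ`, where `σ̂_μ` is the minimizer defining
`D^λ_{f,ν}(μ)` (i.e. the gradient `(1/λ)(μ − σ̂_μ)` of `D^λ_{f,ν}` is `(1/λ)`-Lipschitz):
`d_K(μ − σ̂_μ, ρ − σ̂_ρ) ≤ d_K(μ, ρ)`. -/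
theorem regFDiv_gradient_nonexpansive {d : ℕ} (K : Rd d → Rd d → ℝ)
    (hK : IsKernel K) (hchar : Characteristic K)
    (f : ℝ → ℝ≥0∞) (hf : IsEntropy f) (hmin : UniqueMinOne f)
    (ν : Measure (Rd d)) [IsFiniteMeasure ν] (lam : ℝ) (hlam : 0 < lam)
    (μ ρ : SignedMeasure (Rd d))
    (σμ σρ : Measure (Rd d)) [IsFiniteMeasure σμ] [IsFiniteMeasure σρ]
    (hμopt : fDiv f σμ ν + ENNReal.ofReal (mmdSq K μ σμ.toSignedMeasure / (2 * lam))
      = regFDiv K f ν lam μ)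
    (hρopt : fDiv f σρ ν + ENNReal.ofReal (mmdSq K ρ σρ.toSignedMeasure / (2 * lam))
      = regFDiv K f ν lam ρ) :
    mmd K (μ - σμ.toSignedMeasure) (ρ - σρ.toSignedMeasure) ≤ mmd K μ ρ := by
  obtain ⟨C, hC0, hC⟩ := kernel_bound hK
  have h2l : (0:ℝ) < 2 * lam := by linarith
  have hregμ : regFDiv K f ν lam μ ≠ ⊤ := by
    have h := regFDiv_le K f ν lam μ ν
    rw [fDiv_self f hf ν, zero_add] at h
    exact (h.trans_lt ENNReal.ofReal_lt_top).ne
  have hregρ : regFDiv K f ν lam ρ ≠ ⊤ := by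
    have h := regFDiv_le K f ν lam ρ ν
    rw [fDiv_self f hf ν, zero_add] at h
    exact (h.trans_lt ENNReal.ofReal_lt_top).ne
  have hμtop : fDiv f σμ ν ≠ ⊤ := ne_top_of_le_ne_top hregμ (hμopt ▸ le_self_add)
  have hρtop : fDiv f σρ ν ≠ ⊤ := ne_top_of_le_ne_top hregρ (hρopt ▸ le_self_add)
  have key1 := key_ineq hK hC hchar f hf ν hlam μ σμ σρ hρtop hμopt
  have key2 := key_ineq hK hC hchar f hf ν hlam ρ σρ σμ hμtop hρopt
  set u := μ - σμ.toSignedMeasure with hu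
  set v := ρ - σρ.toSignedMeasure with hv
  -- rewrite the cross terms of `key2` in terms of `e := σρ' - σμ'`
  have hBve : Bf K v (σμ.toSignedMeasure - σρ.toSignedMeasure)
      = -(Bf K v (σρ.toSignedMeasure - σμ.toSignedMeasure)) := by
    rw [B_sub_right hK hC σμ.toSignedMeasure σρ.toSignedMeasure v,
      B_sub_right hK hC σρ.toSignedMeasure σμ.toSignedMeasure v]
    ring
  have hBev : Bf K (σμ.toSignedMeasure - σρ.toSignedMeasure) v
      = -(Bf K (σρ.toSignedMeasure - σμ.toSignedMeasure) v) := by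
    rw [B_sub_left hK hC σμ.toSignedMeasure σρ.toSignedMeasure v,
      B_sub_left hK hC σρ.toSignedMeasure σμ.toSignedMeasure v]
    ring
  rw [hBve, hBev] at key2
  -- sum the two key inequalities
  have hsum : Bf K u (σρ.toSignedMeasure - σμ.toSignedMeasure)
        + Bf K (σρ.toSignedMeasure - σμ.toSignedMeasure) u
      ≤ Bf K v (σρ.toSignedMeasure - σμ.toSignedMeasure)
        + Bf K (σρ.toSignedMeasure - σμ.toSignedMeasure) v := by
    have hid1 : -(Bf K u (σρ.toSignedMeasure - σμ.toSignedMeasure)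
          + Bf K (σρ.toSignedMeasure - σμ.toSignedMeasure) u) / (2*lam)
        = -((Bf K u (σρ.toSignedMeasure - σμ.toSignedMeasure)
          + Bf K (σρ.toSignedMeasure - σμ.toSignedMeasure) u) / (2*lam)) := by ring
    have hid2 : -(-(Bf K v (σρ.toSignedMeasure - σμ.toSignedMeasure))
          + -(Bf K (σρ.toSignedMeasure - σμ.toSignedMeasure) v)) / (2*lam)
        = (Bf K v (σρ.toSignedMeasure - σμ.toSignedMeasure)
          + Bf K (σρ.toSignedMeasure - σμ.toSignedMeasure) v) / (2*lam) := by ring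
    rw [hid1] at key1
    rw [hid2] at key2
    have hd := add_le_add key1 key2
    have hd' : 0 ≤ -((Bf K u (σρ.toSignedMeasure - σμ.toSignedMeasure)
          + Bf K (σρ.toSignedMeasure - σμ.toSignedMeasure) u) / (2*lam))
        + (Bf K v (σρ.toSignedMeasure - σμ.toSignedMeasure)
          + Bf K (σρ.toSignedMeasure - σμ.toSignedMeasure) v) / (2*lam) := by linarith
    have hmul := mul_le_mul_of_nonneg_right hd' h2l.le
    rw [zero_mul] at hmul
    have hc1 : (Bf K u (σρ.toSignedMeasure - σμ.toSignedMeasure)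
          + Bf K (σρ.toSignedMeasure - σμ.toSignedMeasure) u) / (2*lam) * (2*lam)
        = Bf K u (σρ.toSignedMeasure - σμ.toSignedMeasure)
          + Bf K (σρ.toSignedMeasure - σμ.toSignedMeasure) u :=
      div_mul_cancel₀ _ h2l.ne'
    have hc2 : (Bf K v (σρ.toSignedMeasure - σμ.toSignedMeasure)
          + Bf K (σρ.toSignedMeasure - σμ.toSignedMeasure) v) / (2*lam) * (2*lam)
        = Bf K v (σρ.toSignedMeasure - σμ.toSignedMeasure)
          + Bf K (σρ.toSignedMeasure - σμ.toSignedMeasure) v :=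
      div_mul_cancel₀ _ h2l.ne'
    nlinarith [hmul, hc1, hc2]
  -- deduce `cross (u-v) (u-v - (μ-ρ)) ≤ 0` and expand
  have hwe : Bf K (u - v) (σρ.toSignedMeasure - σμ.toSignedMeasure)
      + Bf K (σρ.toSignedMeasure - σμ.toSignedMeasure) (u - v) ≤ 0 := by
    rw [B_sub_left hK hC u v (σρ.toSignedMeasure - σμ.toSignedMeasure),
      B_sub_right hK hC u v (σρ.toSignedMeasure - σμ.toSignedMeasure)]
    linarith [hsum]
  have he : σρ.toSignedMeasure - σμ.toSignedMeasure = (u - v) - (μ - ρ) := by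
    rw [hu, hv]; abel
  rw [he] at hwe
  rw [B_sub_right hK hC (u - v) (μ - ρ) (u - v),
    B_sub_left hK hC (u - v) (μ - ρ) (u - v)] at hwe
  -- Cauchy–Schwarz
  have hcs := cross_le_sqrt hK hC hchar (u - v) (μ - ρ)
  have hkey : Bf K (u - v) (u - v)
      ≤ Real.sqrt (Bf K (u - v) (u - v)) * Real.sqrt (Bf K (μ - ρ) (μ - ρ)) := by
    nlinarith [hwe, hcs]
  -- conclude
  have hww0 : 0 ≤ Bf K (u - v) (u - v) := B_nonneg hK hC hchar _
  have hs0 := Real.sqrt_nonneg (Bf K (u - v) (u - v))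
  have ht0 := Real.sqrt_nonneg (Bf K (μ - ρ) (μ - ρ))
  have hss : Real.sqrt (Bf K (u - v) (u - v)) * Real.sqrt (Bf K (u - v) (u - v))
      = Bf K (u - v) (u - v) := Real.mul_self_sqrt hww0
  show Real.sqrt (mmdSq K u v) ≤ Real.sqrt (mmdSq K μ ρ)
  rw [mmdSq_eq_Bf K u v, mmdSq_eq_Bf K μ ρ]
  rcases eq_or_lt_of_le hs0 with h0 | hpos
  · rw [← h0]
    exact ht0
  · refine le_of_mul_le_mul_left ?_ hpos
    calc Real.sqrt (Bf K (u - v) (u - v)) * Real.sqrt (Bf K (u - v) (u - v))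
        = Bf K (u - v) (u - v) := hss
      _ ≤ Real.sqrt (Bf K (u - v) (u - v)) * Real.sqrt (Bf K (μ - ρ) (μ - ρ)) := hkey
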